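/- Let p_1, ..., p_τ be the first τ primes and for w ∈ ℤ[√p_1, ..., √p_τ] write w = Σ_{f ∈ P_τ} c_f(w) √f with integer coefficients (unique by linear independence), and set M(w) = max_{f ∈ P_τ} |c_f(w)|. Then for any w_1, w_2 ∈ ℤ[√p_1, ..., √p_τ], M(w_1 w_2) ≤ M(w_1) M(w_2) ∏_{j=1}^{τ} (p_j + 1). -/

import Mathlib

/-- The `i`-th prime (0-indexed: `nthPrime 0 = 2`). -/
noncomputable def nthPrime (i : ℕ) : ℕ := Nat.nth Nat.Prime i

/-- The squarefree divisor of `p_1 ⋯ p_τ` indexed by `s ∈ {0,1}^τ`. -/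
noncomputable def sqfDiv (τ : ℕ) (s : Fin τ → Bool) : ℕ :=
  ∏ j, if s j then nthPrime j else 1

/-- `M(w)`: the maximum absolute value of the coordinates of `w` in the basis `{√f : f ∈ P_τ}`. -/
def Mcoef {τ : ℕ} (c : (Fin τ → Bool) → ℤ) : ℕ :=
  Finset.univ.sup fun s => (c s).natAbs


lemma nthPrime_prime (i : ℕ) : (nthPrime i).Prime := Nat.prime_nth_prime i

lemma nthPrime_not_dvd {i j : ℕ} (h : i ≠ j) : ¬ nthPrime i ∣ nthPrime j := by
  rw [Nat.prime_dvd_prime_iff_eq (nthPrime_prime i) (nthPrime_prime j)]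
  exact fun hc => h (Nat.nth_injective Nat.infinite_setOf_prime hc)

lemma nthPrime_pos (i : ℕ) : 0 < nthPrime i := (nthPrime_prime i).pos

noncomputable def Kfield (n : ℕ) : Subfield ℝ :=
  Subfield.closure (Set.range fun i : Fin n => Real.sqrt (nthPrime i))

lemma sqrt_mem_Kfield {n : ℕ} (i : Fin n) : Real.sqrt (nthPrime i) ∈ Kfield n :=
  Subfield.subset_closure ⟨i, rfl⟩

lemma not_isSquare_of_squarefree {r : ℕ} (hsf : Squarefree r) (hr : 1 < r) : ¬ IsSquare r := by
  rintro ⟨k, rfl⟩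
  have := hsf k (dvd_refl _)
  rw [Nat.isUnit_iff] at this
  subst this; omega

theorem sqrt_not_mem_Kfield : ∀ n : ℕ, ∀ r : ℕ, Squarefree r → 1 < r →
    (∀ i < n, ¬ (nthPrime i ∣ r)) → Real.sqrt r ∉ Kfield n := by
  intro n
  induction n with
  | zero =>
    intro r hsf hr _ hmem
    have hle : Kfield 0 ≤ (Rat.castHom ℝ).fieldRange := by
      rw [Kfield, Subfield.closure_le]
      rintro x ⟨i, rfl⟩
      exact i.elim0
    obtain ⟨q, hq⟩ := RingHom.mem_fieldRange.mp (hle hmem)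
    have hirr : Irrational (Real.sqrt r) :=
      irrational_sqrt_natCast_iff.mpr (not_isSquare_of_squarefree hsf hr)
    exact hirr ⟨q, hq⟩
  | succ n IH =>
    intro r hsf hr hd hmem
    set s : ℝ := Real.sqrt (nthPrime n) with hs
    have hps : s * s = (nthPrime n : ℝ) := Real.mul_self_sqrt (by positivity)
    have hsK : s ∉ Kfield n := IH (nthPrime n) (nthPrime_prime n).squarefree
      (nthPrime_prime n).one_lt (fun i hi => nthPrime_not_dvd (by omega))
    have h2mem : (2:ℝ) ∈ Kfield n := by
      have := natCast_mem (Kfield n) 2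
      exact_mod_cast this
    set S : Subfield ℝ :=
    { carrier := {x | ∃ a ∈ Kfield n, ∃ b ∈ Kfield n, x = a + b * s}
      zero_mem' := ⟨0, zero_mem _, 0, zero_mem _, by ring⟩
      one_mem' := ⟨1, one_mem _, 0, zero_mem _, by ring⟩
      add_mem' := by
        rintro x y ⟨a, ha, b, hb, rfl⟩ ⟨c, hc, d, hd', rfl⟩
        exact ⟨a + c, add_mem ha hc, b + d, add_mem hb hd', by ring⟩
      neg_mem' := by
        rintro x ⟨a, ha, b, hb, rfl⟩
        exact ⟨-a, neg_mem ha, -b, neg_mem hb, by ring⟩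
      mul_mem' := by
        rintro x y ⟨a, ha, b, hb, rfl⟩ ⟨c, hc, d, hd', rfl⟩
        refine ⟨a*c + b*d*(nthPrime n),
          add_mem (mul_mem ha hc) (mul_mem (mul_mem hb hd') (natCast_mem _ _)),
          a*d + b*c, add_mem (mul_mem ha hd') (mul_mem hb hc), ?_⟩
        have hexp : (a + b*s)*(c + d*s) = a*c + b*d*(s*s) + (a*d + b*c)*s := by ring
        rw [hexp, hps]
      inv_mem' := by
        rintro x ⟨a, ha, b, hb, rfl⟩
        by_cases hb0 : b = 0
        · exact ⟨a⁻¹, inv_mem ha, 0, zero_mem _, by rw [hb0]; simp⟩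
        · have hd0 : a^2 - b^2*(nthPrime n) ≠ 0 := by
            intro hd'
            have h2 : (a/b - s)*(a/b + s) = 0 := by
              have hss : s^2 = (nthPrime n:ℝ) := by rw [sq]; exact hps
              field_simp
              nlinarith [hss, hd']
            rcases mul_eq_zero.mp h2 with h | h
            · exact hsK (by rw [show s = a/b by linarith]; exact div_mem ha hb)
            · exact hsK (by rw [show s = -(a/b) by linarith]; exact neg_mem (div_mem ha hb))
          have hdmem : a^2 - b^2*(nthPrime n) ∈ Kfield n :=
            sub_mem (pow_mem ha 2) (mul_mem (pow_mem hb 2) (natCast_mem _ _))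
          have key : (a + b*s) * (a - b*s) = a^2 - b^2*(nthPrime n) := by
            have hexp : (a + b*s)*(a - b*s) = a^2 - b^2*(s*s) := by ring
            rw [hexp, hps]
          have hmul : (a + b*s) * ((a - b*s)/(a^2 - b^2*(nthPrime n))) = 1 := by
            rw [← mul_div_assoc, key, div_self hd0]
          refine ⟨a/(a^2 - b^2*(nthPrime n)), div_mem ha hdmem,
            -b/(a^2 - b^2*(nthPrime n)), div_mem (neg_mem hb) hdmem, ?_⟩
          rw [inv_eq_of_mul_eq_one_right hmul]
          ring }
    have hle : Kfield (n+1) ≤ S := by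
      rw [Kfield, Subfield.closure_le]
      rintro x ⟨i, rfl⟩
      refine Fin.lastCases ?_ ?_ i
      · exact ⟨0, zero_mem _, 1, one_mem _, by simp [hs]⟩
      · intro j
        exact ⟨Real.sqrt (nthPrime j), sqrt_mem_Kfield j, 0, zero_mem _, by simp⟩
    obtain ⟨a, ha, b, hb, heq⟩ : ∃ a ∈ Kfield n, ∃ b ∈ Kfield n,
        Real.sqrt r = a + b * s := hle hmem
    have hr0 : (0:ℝ) ≤ (r:ℝ) := by positivity
    have h1 : (a + b*s)*(a + b*s) = (r:ℝ) := by rw [← heq]; exact Real.mul_self_sqrt hr0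
    have hsq : (r:ℝ) = a^2 + b^2*(nthPrime n) + 2*a*b*s := by
      rw [← h1]
      have hexp : (a + b*s)*(a + b*s) = a^2 + b^2*(s*s) + 2*a*b*s := by ring
      rw [hexp, hps]
    by_cases hb0 : b = 0
    · refine IH r hsf hr (fun i hi => hd i (by omega)) ?_
      rw [heq, hb0]; simpa using ha
    · by_cases ha0 : a = 0
      · have hrp : Real.sqrt (r * nthPrime n) = b * (nthPrime n) := by
          rw [Real.sqrt_mul hr0, heq, ha0, ← hs, zero_add, mul_assoc, hps]
        have hco : Nat.Coprime r (nthPrime n) :=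
          (Nat.Prime.coprime_iff_not_dvd (nthPrime_prime n)).mpr
            (hd n (Nat.lt_succ_self n)) |>.symm
        refine IH (r * nthPrime n)
          ((Nat.squarefree_mul hco).mpr ⟨hsf, (nthPrime_prime n).squarefree⟩)
          (lt_of_lt_of_le hr (Nat.le_mul_of_pos_right r (nthPrime_pos n)))
          (fun i hi hdvd => ?_) ?_
        · rcases (Nat.Prime.dvd_mul (nthPrime_prime i)).mp hdvd with h | h
          · exact hd i (by omega) h
          · exact nthPrime_not_dvd (show i ≠ n by omega) h
        · rw [Nat.cast_mul, hrp]; exact mul_mem hb (natCast_mem _ _)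
      · apply hsK
        have hse : s = ((r:ℝ) - a^2 - b^2*(nthPrime n))/(2*a*b) := by
          rw [eq_div_iff (by simp [ha0, hb0])]
          linarith [hsq]
        rw [hse]
        exact div_mem (sub_mem (sub_mem (natCast_mem _ _) (pow_mem ha 2))
          (mul_mem (pow_mem hb 2) (natCast_mem _ _)))
          (mul_mem (mul_mem h2mem ha) hb)

lemma sqfDiv_snoc (n : ℕ) (t : Fin n → Bool) (b : Bool) :
    sqfDiv (n+1) (Fin.snoc t b) = sqfDiv n t * (if b then nthPrime n else 1) := by
  rw [sqfDiv, sqfDiv, Fin.prod_univ_castSucc]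
  simp

lemma sqrt_sqfDiv (τ : ℕ) (s : Fin τ → Bool) :
    Real.sqrt (sqfDiv τ s) = ∏ j, if s j then Real.sqrt (nthPrime j) else 1 := by
  have hP : (0:ℝ) ≤ ∏ j, if s j then Real.sqrt (nthPrime j) else 1 :=
    Finset.prod_nonneg fun j _ => by
      by_cases h : s j <;> simp [h, Real.sqrt_nonneg]
  have hsq : (∏ j, if s j then Real.sqrt (nthPrime j) else 1)^2 = (sqfDiv τ s : ℝ) := by
    rw [sqfDiv, Nat.cast_prod, ← Finset.prod_pow]
    refine Finset.prod_congr rfl fun j _ => ?_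
    by_cases h : s j <;>
      simp [h, sq, Real.mul_self_sqrt (Nat.cast_nonneg (nthPrime j))]
  rw [← hsq, Real.sqrt_sq hP]

lemma sqrt_sqfDiv_mem (τ : ℕ) (s : Fin τ → Bool) :
    Real.sqrt (sqfDiv τ s) ∈ Kfield τ := by
  rw [sqrt_sqfDiv]
  exact prod_mem fun j _ => by
    by_cases h : s j
    · simpa [h] using sqrt_mem_Kfield j
    · simp [h, one_mem]

def snocE (n : ℕ) : (Bool × (Fin n → Bool)) ≃ (Fin (n+1) → Bool) where
  toFun p := Fin.snoc p.2 p.1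
  invFun f := (f (Fin.last n), Fin.init f)
  left_inv := by rintro ⟨b, t⟩; simp
  right_inv := fun f => Fin.snoc_init_self f

theorem linind : ∀ n : ℕ, ∀ c : (Fin n → Bool) → ℤ,
    (∑ s, (c s : ℝ) * Real.sqrt (sqfDiv n s)) = 0 → ∀ s, c s = 0 := by
  intro n
  induction n with
  | zero =>
    intro c h s
    rw [Finset.sum_eq_single s (fun b _ hb => absurd (Subsingleton.elim b s) hb)
      (fun hs => absurd (Finset.mem_univ s) hs)] at h
    have h1 : sqfDiv 0 s = 1 := by simp [sqfDiv]
    rw [h1] at h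
    simpa using h
  | succ n IH =>
    intro c h s
    have keyF : ∀ t : Fin n → Bool, Real.sqrt (sqfDiv (n+1) (Fin.snoc t false)) =
        Real.sqrt (sqfDiv n t) := by
      intro t
      rw [sqfDiv_snoc]; simp
    have keyT : ∀ t : Fin n → Bool, Real.sqrt (sqfDiv (n+1) (Fin.snoc t true)) =
        Real.sqrt (sqfDiv n t) * Real.sqrt (nthPrime n) := by
      intro t
      rw [sqfDiv_snoc, if_pos rfl, Nat.cast_mul, Real.sqrt_mul (by positivity)]
    have hsum : (∑ t : Fin (n+1) → Bool, (c t : ℝ) * Real.sqrt (sqfDiv (n+1) t)) =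
        (∑ t : Fin n → Bool, ((c (Fin.snoc t false) : ℝ) * Real.sqrt (sqfDiv n t)))
        + (∑ t : Fin n → Bool, ((c (Fin.snoc t true) : ℝ) * Real.sqrt (sqfDiv n t)))
          * Real.sqrt (nthPrime n) := by
      rw [← Equiv.sum_comp (snocE n)
        (fun t => (c t : ℝ) * Real.sqrt (sqfDiv (n+1) t))]
      rw [Fintype.sum_prod_type, Fintype.sum_bool]
      simp only [snocE, Equiv.coe_fn_mk, keyT, keyF]
      rw [add_comm, Finset.sum_mul]
      congr 1
      exact Finset.sum_congr rfl fun t _ => by ring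
    rw [hsum] at h
    set A := ∑ t : Fin n → Bool, ((c (Fin.snoc t false) : ℝ) * Real.sqrt (sqfDiv n t)) with hA
    set B := ∑ t : Fin n → Bool, ((c (Fin.snoc t true) : ℝ) * Real.sqrt (sqfDiv n t)) with hB
    have hAmem : A ∈ Kfield n :=
      sum_mem fun t _ => mul_mem (intCast_mem _ _) (sqrt_sqfDiv_mem n t)
    have hBmem : B ∈ Kfield n :=
      sum_mem fun t _ => mul_mem (intCast_mem _ _) (sqrt_sqfDiv_mem n t)
    have hpnK : Real.sqrt (nthPrime n) ∉ Kfield n :=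
      sqrt_not_mem_Kfield n (nthPrime n) (nthPrime_prime n).squarefree
        (nthPrime_prime n).one_lt
        (fun i hi => nthPrime_not_dvd (Nat.ne_of_lt hi))
    have hB0 : B = 0 := by
      by_contra hB0
      apply hpnK
      rw [show Real.sqrt (nthPrime n) = (-A)/B by
        rw [eq_div_iff hB0]; linarith [h]]
      exact div_mem (neg_mem hAmem) hBmem
    have hA0 : A = 0 := by
      rw [hB0, zero_mul, add_zero] at h
      exact h
    have h1 := IH (fun t => c (Fin.snoc t false)) hA0
    have h2 := IH (fun t => c (Fin.snoc t true)) hB0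
    rw [← Fin.snoc_init_self s]
    cases hsl : s (Fin.last n)
    · exact h1 (Fin.init s)
    · exact h2 (Fin.init s)

def xorF {τ : ℕ} (s₁ s₂ : Fin τ → Bool) : Fin τ → Bool := fun j => xor (s₁ j) (s₂ j)

noncomputable def gInt (τ : ℕ) (s₁ s₂ : Fin τ → Bool) : ℤ :=
  ∏ j, if s₁ j && s₂ j then (nthPrime j : ℤ) else 1

lemma gInt_nonneg (τ : ℕ) (s₁ s₂ : Fin τ → Bool) : 0 ≤ gInt τ s₁ s₂ :=
  Finset.prod_nonneg fun j _ => by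
    by_cases h : s₁ j && s₂ j <;> simp [h, Int.natCast_nonneg]

lemma gInt_cast (τ : ℕ) (s₁ s₂ : Fin τ → Bool) :
    ((gInt τ s₁ s₂ : ℤ) : ℝ) = ∏ j, if s₁ j && s₂ j then (nthPrime j : ℝ) else 1 := by
  rw [gInt, Int.cast_prod]
  exact Finset.prod_congr rfl fun j _ => by
    by_cases h : s₁ j && s₂ j <;> simp [h]

lemma xorF_invol {τ : ℕ} (s₁ : Fin τ → Bool) : Function.Involutive (xorF s₁) := by
  intro t; funext j; simp [xorF]

lemma mul_sqrt_sqfDiv (τ : ℕ) (s₁ s₂ : Fin τ → Bool) :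
    Real.sqrt (sqfDiv τ s₁) * Real.sqrt (sqfDiv τ s₂) =
      ((gInt τ s₁ s₂ : ℤ) : ℝ) * Real.sqrt (sqfDiv τ (xorF s₁ s₂)) := by
  rw [sqrt_sqfDiv, sqrt_sqfDiv, sqrt_sqfDiv, gInt_cast, ← Finset.prod_mul_distrib,
    ← Finset.prod_mul_distrib]
  refine Finset.prod_congr rfl fun j _ => ?_
  rcases hj1 : s₁ j <;> rcases hj2 : s₂ j <;>
    simp [xorF, hj1, hj2, Real.mul_self_sqrt (Nat.cast_nonneg (nthPrime j))]

theorem stmt_8 (τ : ℕ) (c₁ c₂ c₃ : (Fin τ → Bool) → ℤ)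
    (h : (∑ s, (c₃ s : ℝ) * Real.sqrt (sqfDiv τ s)) =
      (∑ s, (c₁ s : ℝ) * Real.sqrt (sqfDiv τ s)) * (∑ s, (c₂ s : ℝ) * Real.sqrt (sqfDiv τ s))) :
    Mcoef c₃ ≤ Mcoef c₁ * Mcoef c₂ * ∏ j : Fin τ, (nthPrime j + 1) := by
  classical
  set d : (Fin τ → Bool) → ℤ :=
    fun t => ∑ s₁, c₁ s₁ * c₂ (xorF s₁ t) * gInt τ s₁ (xorF s₁ t) with hd
  -- step 1: rewrite RHS as ∑ t, d t * √(sqfDiv t)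
  have hRHS : (∑ s, (c₁ s : ℝ) * Real.sqrt (sqfDiv τ s)) *
      (∑ s, (c₂ s : ℝ) * Real.sqrt (sqfDiv τ s)) =
      ∑ t, ((d t : ℤ) : ℝ) * Real.sqrt (sqfDiv τ t) := by
    rw [Finset.sum_mul_sum]
    have step1 : ∀ s₁ : Fin τ → Bool,
        (∑ s₂, ((c₁ s₁ : ℝ) * Real.sqrt (sqfDiv τ s₁)) * ((c₂ s₂ : ℝ) * Real.sqrt (sqfDiv τ s₂)))
        = ∑ t, ((c₁ s₁ * c₂ (xorF s₁ t) * gInt τ s₁ (xorF s₁ t) : ℤ) : ℝ)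
            * Real.sqrt (sqfDiv τ t) := by
      intro s₁
      rw [← Equiv.sum_comp ((xorF_invol s₁).toPerm)
        (fun s₂ => ((c₁ s₁ : ℝ) * Real.sqrt (sqfDiv τ s₁)) * ((c₂ s₂ : ℝ) * Real.sqrt (sqfDiv τ s₂)))]
      refine Finset.sum_congr rfl fun t _ => ?_
      have happ : ((xorF_invol s₁).toPerm) t = xorF s₁ t := rfl
      rw [happ]
      have : Real.sqrt (sqfDiv τ s₁) * Real.sqrt (sqfDiv τ (xorF s₁ t)) =
          ((gInt τ s₁ (xorF s₁ t) : ℤ) : ℝ) * Real.sqrt (sqfDiv τ (xorF s₁ (xorF s₁ t))) :=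
        mul_sqrt_sqfDiv τ s₁ (xorF s₁ t)
      rw [xorF_invol s₁ t] at this
      push_cast
      linear_combination ((c₁ s₁ : ℝ) * (c₂ (xorF s₁ t) : ℝ)) * this
    rw [Finset.sum_congr rfl fun s₁ _ => step1 s₁, Finset.sum_comm]
    refine Finset.sum_congr rfl fun t _ => ?_
    rw [hd]
    push_cast
    rw [Finset.sum_mul]
  -- step 2: uniqueness of coefficients
  have hc3 : ∀ t, c₃ t = d t := by
    have h0 : (∑ t, ((c₃ t - d t : ℤ) : ℝ) * Real.sqrt (sqfDiv τ t)) = 0 := by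
      push_cast
      simp only [sub_mul]
      rw [Finset.sum_sub_distrib, ← hRHS, ← h, sub_self]
    intro t
    have := linind τ (fun t => c₃ t - d t) h0 t
    omega
  -- step 3: the bound
  have hsum_g : ∀ t : Fin τ → Bool,
      (∑ s₁ : Fin τ → Bool, gInt τ s₁ (xorF s₁ t)) ≤ ∏ j : Fin τ, ((nthPrime j : ℤ) + 1) := by
    intro t
    have heq : (∑ s₁ : Fin τ → Bool, gInt τ s₁ (xorF s₁ t)) =
        ∏ j : Fin τ, ((if xor true (t j) then (nthPrime j : ℤ) else 1) + 1) := by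
      rw [show (∑ s₁ : Fin τ → Bool, gInt τ s₁ (xorF s₁ t)) =
          ∑ s₁ ∈ Fintype.piFinset (fun _ : Fin τ => (Finset.univ : Finset Bool)),
            ∏ j, (if s₁ j && xor (s₁ j) (t j) then (nthPrime j : ℤ) else 1) by
        rw [Fintype.piFinset_univ]; rfl]
      rw [← Finset.prod_univ_sum (fun _ : Fin τ => (Finset.univ : Finset Bool))
        (fun j b => if b && xor b (t j) then (nthPrime j : ℤ) else 1)]
      refine Finset.prod_congr rfl fun j _ => ?_
      rw [Fintype.sum_bool]
      simp
    rw [heq]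
    refine Finset.prod_le_prod (fun j _ => by positivity) fun j _ => ?_
    have := (nthPrime_prime j).two_le
    rcases t j <;> simp <;> omega
  refine Finset.sup_le fun t _ => ?_
  rw [← Nat.cast_le (α := ℤ)]
  push_cast
  rw [hc3 t]
  calc |d t| = |∑ s₁, c₁ s₁ * c₂ (xorF s₁ t) * gInt τ s₁ (xorF s₁ t)| := by rw [hd]
    _
      ≤ ∑ s₁, |c₁ s₁ * c₂ (xorF s₁ t) * gInt τ s₁ (xorF s₁ t)| :=
        Finset.abs_sum_le_sum_abs _ _
    _ ≤ ∑ s₁ : Fin τ → Bool, (Mcoef c₁ : ℤ) * (Mcoef c₂ : ℤ) * gInt τ s₁ (xorF s₁ t) := by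
        refine Finset.sum_le_sum fun s₁ _ => ?_
        rw [abs_mul, abs_mul, abs_of_nonneg (gInt_nonneg τ s₁ _)]
        have h1 : |c₁ s₁| ≤ (Mcoef c₁ : ℤ) := by
          rw [Int.abs_eq_natAbs, Nat.cast_le]
          exact Finset.le_sup (f := fun s => (c₁ s).natAbs) (Finset.mem_univ s₁)
        have h2 : |c₂ (xorF s₁ t)| ≤ (Mcoef c₂ : ℤ) := by
          rw [Int.abs_eq_natAbs, Nat.cast_le]
          exact Finset.le_sup (f := fun s => (c₂ s).natAbs) (Finset.mem_univ _)
        have hg0 := gInt_nonneg τ s₁ (xorF s₁ t)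
        have habs2 : (0:ℤ) ≤ |c₂ (xorF s₁ t)| := abs_nonneg _
        have hM1 : (0:ℤ) ≤ (Mcoef c₁ : ℤ) := Int.natCast_nonneg _
        exact mul_le_mul_of_nonneg_right (mul_le_mul h1 h2 habs2 hM1) hg0
    _ = (Mcoef c₁ : ℤ) * (Mcoef c₂ : ℤ) * ∑ s₁ : Fin τ → Bool, gInt τ s₁ (xorF s₁ t) := by
        rw [← Finset.mul_sum]
    _ ≤ (Mcoef c₁ : ℤ) * (Mcoef c₂ : ℤ) * ∏ j : Fin τ, ((nthPrime j : ℤ) + 1) := by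
        have hg : (0:ℤ) ≤ (Mcoef c₁ : ℤ) * (Mcoef c₂ : ℤ) := by positivity
        exact mul_le_mul_of_nonneg_left (hsum_g t) hg
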